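/- Let F̄ be an algebraically closed field and A ⊆ F̄^n a finite set. With D(A) the lex standard set of the vanishing ideal of A and A_λ := A ∩ {x_n = λ} viewed in F̄^{n−1}, one has D(A) = Σ_{λ ∈ F̄} D(A_λ), the Connect Four sum of the standard sets of the slices (all but finitely many summands are empty, and each D(A_λ) ∈ 𝒟_{n−1} is embedded into ℕ^n as D(A_λ)×{0}). -/

import Mathlib

/-- A standard set: the complement is closed under addition of elements of `ℕ^n`. -/
def IsStdSet {n : ℕ} (Δ : Set (Fin n → ℕ)) : Prop :=
  ∀ β γ : Fin n → ℕ, β ∉ Δ → β + γ ∉ Δ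

/-- The column of `Δ ⊆ ℕ^{n+1}` over `γ ∈ ℕ^n`. -/
def colSet {n : ℕ} (Δ : Set (Fin (n + 1) → ℕ)) (γ : Fin n → ℕ) : Set ℕ :=
  {m | Fin.snoc γ m ∈ Δ}

/-- The Connect Four sum of two subsets of `ℕ^{n+1}`: over each column of `ℕ^n`
one stacks the total number of elements of `Δ` and `Δ'` in that column. -/
def cfSum {n : ℕ} (Δ Δ' : Set (Fin (n + 1) → ℕ)) : Set (Fin (n + 1) → ℕ) :=
  {β | β (Fin.last n) < (colSet Δ (Fin.init β)).ncard + (colSet Δ' (Fin.init β)).ncard}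

/-- The Connect Four sum of a finite multiset of subsets of `ℕ^n`, each embedded
into `ℕ^{n+1}` as `D × {0}`: over a column `γ` one stacks as many boxes as there
are members of the multiset containing `γ` (counted with multiplicity). -/
def cfSumMultiset {n : ℕ} (M : Multiset (Set (Fin n → ℕ))) : Set (Fin (n + 1) → ℕ) :=
  {β | β (Fin.last n) < (M.map fun D => Set.indicator D (fun _ => (1 : ℕ)) (Fin.init β)).sum}

/-- A Connect Four decomposition of `Δ ⊆ ℕ^{n+1}` into a multiset of nonempty
finite standard sets in `ℕ^n`. -/
def IsCFDecomposition {n : ℕ} (M : Multiset (Set (Fin n → ℕ)))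
    (Δ : Set (Fin (n + 1) → ℕ)) : Prop :=
  (∀ D ∈ M, IsStdSet D ∧ D.Finite ∧ D.Nonempty) ∧ cfSumMultiset M = Δ

/-- Lexicographic order on exponent vectors for `x₁ ≻ x₂ ≻ … ≻ x_n`:
`α ≺ β` iff at the first index where they differ, `α` is smaller. -/
def lexLT {n : ℕ} (α β : Fin n → ℕ) : Prop :=
  ∃ i : Fin n, (∀ j : Fin n, j < i → α j = β j) ∧ α i < β i

/-- `α` is the leading exponent (w.r.t. lex) of the polynomial `p`. -/
def IsLeadExp {n : ℕ} {k : Type*} [CommSemiring k]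
    (p : MvPolynomial (Fin n) k) (α : Fin n → ℕ) : Prop :=
  MvPolynomial.coeff (Finsupp.equivFunOnFinite.symm α) p ≠ 0 ∧
    ∀ β : Fin n → ℕ, MvPolynomial.coeff (Finsupp.equivFunOnFinite.symm β) p ≠ 0 →
      β = α ∨ lexLT β α

/-- The standard set `D(A)` of the vanishing ideal of a set of points
`A ⊆ K^n`, w.r.t. the lexicographic order with `x₁ ≻ … ≻ x_n`: the complement of
the set of leading exponents of nonzero polynomials vanishing on `A`. -/
def stdOfPoints {n : ℕ} {K : Type*} [Field K] (A : Set (Fin n → K)) : Set (Fin n → ℕ) :=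
  {β | ¬ ∃ p : MvPolynomial (Fin n) K,
    (∀ a ∈ A, MvPolynomial.eval a p = 0) ∧ p ≠ 0 ∧ IsLeadExp p β}


open MvPolynomial

noncomputable section

variable {K : Type*} [Field K] {n : ℕ}

/-- shorthand -/
def toMv {n : ℕ} (γ : Fin n → ℕ) : Fin n →₀ ℕ := Finsupp.equivFunOnFinite.symm γ

@[simp] lemma toMv_coe {n : ℕ} (γ : Fin n → ℕ) : ⇑(toMv γ) = γ := rfl

lemma toMv_inj {n : ℕ} {γ δ : Fin n → ℕ} (h : toMv γ = toMv δ) : γ = δ := by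
  simpa using Finsupp.equivFunOnFinite.symm.injective h

/-- embedding of n-variable polynomials into (n+1)-variable polynomials -/
def emb : MvPolynomial (Fin n) K →+* MvPolynomial (Fin (n+1)) K :=
  (rename (Fin.castSucc : Fin n → Fin (n+1))).toRingHom

/-- lifting a univariate polynomial to the last variable -/
def liftT : Polynomial K →+* MvPolynomial (Fin (n+1)) K :=
  Polynomial.eval₂RingHom MvPolynomial.C (X (Fin.last n))

lemma mapDomain_castSucc (δ : Fin n → ℕ) :
    Finsupp.mapDomain (Fin.castSucc : Fin n → Fin (n+1)) (toMv δ) = toMv (Fin.snoc δ 0) := by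
  ext i
  induction i using Fin.lastCases with
  | last =>
    rw [Finsupp.mapDomain_notin_range]
    · simp
    · rintro ⟨j, hj⟩
      exact absurd hj (Fin.castSucc_lt_last j).ne
  | cast j =>
    rw [Finsupp.mapDomain_apply (Fin.castSucc_injective n)]
    simp

lemma coeff_emb (g : MvPolynomial (Fin n) K) (δ : Fin n → ℕ) (j : ℕ) :
    coeff (toMv (Fin.snoc δ j)) (emb g) = if j = 0 then coeff (toMv δ) g else 0 := by
  rcases eq_or_ne j 0 with rfl | hj
  · simp only [emb, AlgHom.toRingHom_eq_coe, RingHom.coe_coe, if_true, eq_self_iff_true]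
    rw [← mapDomain_castSucc, coeff_rename_mapDomain _ (Fin.castSucc_injective n)]
  · rw [if_neg hj]
    by_contra h
    obtain ⟨u, hu, hu2⟩ := coeff_rename_ne_zero _ _ _ h
    have := congrArg (fun v : Fin (n+1) →₀ ℕ => v (Fin.last n)) hu
    rw [Finsupp.mapDomain_notin_range] at this
    · exact hj (by simpa using this.symm)
    · rintro ⟨k, hk⟩
      exact absurd hk (Fin.castSucc_lt_last k).ne

lemma coeff_emb_mul_liftT (g : MvPolynomial (Fin n) K) (f : Polynomial K)
    (δ : Fin n → ℕ) (j : ℕ) :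
    coeff (toMv (Fin.snoc δ j)) (emb g * liftT f) = coeff (toMv δ) g * f.coeff j := by
  have hT : ∀ k : ℕ, (X (Fin.last n) : MvPolynomial (Fin (n+1)) K) ^ k
      = monomial (Finsupp.single (Fin.last n) k) 1 := by
    intro k; rw [X_pow_eq_monomial]
  have key : ∀ k : ℕ, coeff (toMv (Fin.snoc δ j)) (emb g * X (Fin.last n) ^ k)
      = if j = k then coeff (toMv δ) g else 0 := by
    intro k
    rw [hT, coeff_mul_monomial']
    by_cases hkj : Finsupp.single (Fin.last n) k ≤ toMv (Fin.snoc δ j)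
    · have hk : k ≤ j := by
        have := hkj (Fin.last n); simpa using this
      have hsub : toMv (Fin.snoc δ j) - Finsupp.single (Fin.last n) k
          = toMv (Fin.snoc δ (j - k)) := by
        ext i
        induction i using Fin.lastCases with
        | last => simp
        | cast i =>
          rw [Finsupp.tsub_apply, Finsupp.single_apply,
            if_neg (Fin.castSucc_lt_last i).ne']
          simp
      rw [if_pos hkj, hsub, coeff_emb, mul_one]
      rcases eq_or_ne j k with rfl | hne
      · simp
      · rw [if_neg hne, if_neg (by omega)]
    · rw [if_neg hkj, if_neg]
      rintro rfl
      exact hkj (by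
        intro i
        rcases eq_or_ne i (Fin.last n) with rfl | hne
        · simp
        · simp [Finsupp.single_apply, hne.symm])
  rw [liftT, Polynomial.coe_eval₂RingHom, Polynomial.eval₂_eq_sum, Polynomial.sum_def,
    Finset.mul_sum, coeff_sum]
  have : ∀ k ∈ f.support, coeff (toMv (Fin.snoc δ j)) (emb g * (C (f.coeff k) * X (Fin.last n) ^ k))
      = if j = k then coeff (toMv δ) g * f.coeff k else 0 := by
    intro k _
    rw [mul_comm (C (f.coeff k) : MvPolynomial (Fin (n+1)) K), ← mul_assoc,
      mul_comm (emb g * X (Fin.last n) ^ k), coeff_C_mul, key]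
    split <;> ring
  rw [Finset.sum_congr rfl this, Finset.sum_ite_eq]
  by_cases hj : j ∈ f.support
  · rw [if_pos hj]
  · rw [if_neg hj, Polynomial.notMem_support_iff.mp hj, mul_zero]

end

noncomputable section
variable {K : Type*} [Field K] {n : ℕ}
open MvPolynomial

lemma eval_emb_mul_liftT (g : MvPolynomial (Fin n) K) (f : Polynomial K)
    (a : Fin n → K) (lam : K) :
    eval (Fin.snoc a lam) (emb g * liftT f) = eval a g * f.eval lam := by
  rw [map_mul]
  congr 1
  · show eval (Fin.snoc a lam) (rename Fin.castSucc g) = _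
    rw [eval_rename]
    have : (Fin.snoc a lam : Fin (n+1) → K) ∘ Fin.castSucc = a := by
      funext i; simp
    rw [this]
  · show eval (Fin.snoc a lam) (Polynomial.eval₂ C (X (Fin.last n)) f) = _
    rw [Polynomial.hom_eval₂]
    have h1 : (eval (Fin.snoc a lam)).comp (C : K →+* MvPolynomial (Fin (n+1)) K)
        = RingHom.id K := by ext x; simp
    have h2 : eval (Fin.snoc a lam) (X (Fin.last n)) = lam := by simp
    rw [h1, h2]
    rfl

/-- substitution of `lam` for the last variable -/
def subst (lam : K) : MvPolynomial (Fin (n+1)) K →ₐ[K] MvPolynomial (Fin n) K :=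
  aeval (Fin.snoc (fun i => X i) (C lam))

lemma eval_subst (lam : K) (p : MvPolynomial (Fin (n+1)) K) (a : Fin n → K) :
    eval a (subst lam p) = eval (Fin.snoc a lam) p := by
  show eval a (aeval (Fin.snoc (fun i => X i) (C lam)) p) = _
  rw [aeval_def, eval₂_comp_left]
  have h1 : (eval a).comp (algebraMap K (MvPolynomial (Fin n) K)) = RingHom.id K := by
    ext x; simp [MvPolynomial.algebraMap_eq]
  have h2 : (eval a) ∘ (Fin.snoc (fun i => X i) (C lam) : Fin (n+1) → _)
      = Fin.snoc a lam := by
    funext i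
    induction i using Fin.lastCases with
    | last => simp
    | cast j => simp
  rw [h1, h2, MvPolynomial.eval₂_id]

end

noncomputable section
variable {K : Type*} [Field K] {n : ℕ}
open MvPolynomial

lemma coe_eq_snoc (u : Fin (n+1) →₀ ℕ) : ⇑u = Fin.snoc (Fin.init ⇑u) (u (Fin.last n)) :=
  (Fin.snoc_init_self ⇑u).symm

lemma toMv_coe_eq (u : Fin (n+1) →₀ ℕ) : toMv ⇑u = u :=
  Finsupp.equivFunOnFinite.symm_apply_apply u

lemma subst_monomial (lam : K) (u : Fin (n+1) →₀ ℕ) (c : K) :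
    subst lam (monomial u c)
      = monomial (toMv (Fin.init ⇑u)) (c * lam ^ (u (Fin.last n))) := by
  rw [subst, aeval_monomial, monomial_eq]
  rw [Finsupp.prod_fintype _ _ (fun i => pow_zero _), Finsupp.prod_fintype _ _
    (fun i => pow_zero _)]
  rw [Fin.prod_univ_castSucc]
  simp only [Fin.snoc_castSucc, Fin.snoc_last, toMv_coe]
  rw [map_mul, map_pow]
  have : (algebraMap K (MvPolynomial (Fin n) K)) c = C c := rfl
  rw [this]
  simp only [Fin.init]
  ring

lemma coeff_subst (lam : K) (p : MvPolynomial (Fin (n+1)) K) (δ : Fin n → ℕ) :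
    coeff (toMv δ) (subst lam p)
      = ∑ u ∈ p.support,
          (if Fin.init ⇑u = δ then coeff u p * lam ^ (u (Fin.last n)) else 0) := by
  conv_lhs => rw [as_sum p, map_sum, coeff_sum]
  refine Finset.sum_congr rfl fun u _ => ?_
  rw [subst_monomial, coeff_monomial]
  by_cases h : Fin.init ⇑u = δ
  · rw [if_pos h, if_pos (by rw [h])]
  · rw [if_neg h, if_neg (fun hh => h (toMv_inj hh))]

lemma exists_of_coeff_subst_ne_zero {lam : K} {p : MvPolynomial (Fin (n+1)) K}
    {δ : Fin n → ℕ} (h : coeff (toMv δ) (subst lam p) ≠ 0) :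
    ∃ j : ℕ, coeff (toMv (Fin.snoc δ j)) p ≠ 0 := by
  by_contra hc
  push_neg at hc
  apply h
  rw [coeff_subst]
  refine Finset.sum_eq_zero fun u hu => ?_
  by_cases hι : Fin.init ⇑u = δ
  · rw [if_pos hι]
    have : coeff u p = 0 := by
      have : u = toMv (Fin.snoc δ (u (Fin.last n))) := by
        rw [← hι, ← coe_eq_snoc, toMv_coe_eq]
      rw [this]; exact hc _
    rw [this, zero_mul]
  · rw [if_neg hι]

lemma coeff_subst_eq_eval {lam : K} {p : MvPolynomial (Fin (n+1)) K}
    {δ : Fin n → ℕ} {m : ℕ}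
    (h : ∀ j, m < j → coeff (toMv (Fin.snoc δ j)) p = 0) :
    coeff (toMv δ) (subst lam p)
      = Polynomial.eval lam (∑ j ∈ Finset.range (m+1),
          Polynomial.C (coeff (toMv (Fin.snoc δ j)) p) * Polynomial.X ^ j) := by
  rw [coeff_subst]
  rw [Polynomial.eval_finset_sum]
  simp only [Polynomial.eval_mul, Polynomial.eval_C, Polynomial.eval_pow, Polynomial.eval_X]
  have coeff_as_sum : ∀ v : Fin (n+1) →₀ ℕ,
      coeff v p = ∑ u ∈ p.support, (if u = v then coeff u p else 0) := by
    intro v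
    rw [Finset.sum_ite_eq' p.support v (fun u => coeff u p)]
    by_cases hv : v ∈ p.support
    · rw [if_pos hv]
    · rw [if_neg hv, notMem_support_iff.mp hv]
  rw [show (∑ j ∈ Finset.range (m+1), coeff (toMv (Fin.snoc δ j)) p * lam ^ j)
      = ∑ j ∈ Finset.range (m+1), ∑ u ∈ p.support,
          (if u = toMv (Fin.snoc δ j) then coeff u p else 0) * lam ^ j from
    Finset.sum_congr rfl fun j _ => by
      rw [coeff_as_sum (toMv (Fin.snoc δ j)), Finset.sum_mul]]
  rw [Finset.sum_comm]
  refine Finset.sum_congr rfl fun u hu => ?_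
  have hiff : ∀ j : ℕ, u = toMv (Fin.snoc δ j) ↔ (Fin.init ⇑u = δ ∧ u (Fin.last n) = j) := by
    intro j
    constructor
    · rintro rfl
      simp only [toMv_coe]
      exact ⟨Fin.init_snoc _ _, Fin.snoc_last _ _⟩
    · rintro ⟨h1, h2⟩
      rw [← toMv_coe_eq u]
      congr 1
      rw [coe_eq_snoc u, h1, h2]
  by_cases hι : Fin.init ⇑u = δ
  · rw [if_pos hι]
    have hle : u (Fin.last n) ≤ m := by
      by_contra hgt
      push_neg at hgt
      have : u = toMv (Fin.snoc δ (u (Fin.last n))) := by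
        rw [← hι, ← coe_eq_snoc, toMv_coe_eq]
      exact notMem_support_iff.mpr (this ▸ h _ hgt) hu
    have : ∀ j ∈ Finset.range (m+1),
        (if u = toMv (Fin.snoc δ j) then coeff u p else 0) * lam ^ j
          = if u (Fin.last n) = j then coeff u p * lam ^ j else 0 := by
      intro j _
      by_cases hj : u (Fin.last n) = j
      · rw [if_pos ((hiff j).mpr ⟨hι, hj⟩), if_pos hj]
      · rw [if_neg (fun hh => hj ((hiff j).mp hh).2), if_neg hj, zero_mul]
    rw [Finset.sum_congr rfl this, Finset.sum_ite_eq (Finset.range (m+1)) (u (Fin.last n))]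
    rw [if_pos (Finset.mem_range.mpr (by omega))]
  · rw [if_neg hι]
    refine (Finset.sum_eq_zero fun j _ => ?_).symm
    rw [if_neg (fun hh => hι ((hiff j).mp hh).1), zero_mul]

end




noncomputable section
variable {K : Type*} [Field K] {n : ℕ}
open MvPolynomial

lemma lexLT_snoc_of_lexLT {δ γ : Fin n → ℕ} (h : lexLT δ γ) (j m : ℕ) :
    lexLT (Fin.snoc δ j) (Fin.snoc γ m) := by
  obtain ⟨i, hpre, hlt⟩ := h
  refine ⟨Fin.castSucc i, fun j' hj' => ?_, by simpa using hlt⟩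
  have hj'lt : j' < Fin.last n := lt_trans hj' (Fin.castSucc_lt_last i)
  obtain ⟨j'', rfl⟩ := Fin.exists_castSucc_eq.mpr (Fin.ne_last_of_lt hj')
  simp only [Fin.snoc_castSucc]
  exact hpre j'' (by simpa using hj')

lemma lexLT_snoc_lt {γ : Fin n → ℕ} {j m : ℕ} (h : j < m) :
    lexLT (Fin.snoc γ j) (Fin.snoc γ m) := by
  refine ⟨Fin.last n, fun j' hj' => ?_, by simpa using h⟩
  obtain ⟨j'', rfl⟩ := Fin.exists_castSucc_eq.mpr (Fin.ne_last_of_lt hj')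
  simp

lemma lexLT_snoc_cases {δ γ : Fin n → ℕ} {j m : ℕ}
    (h : lexLT (Fin.snoc δ j) (Fin.snoc γ m)) :
    (δ = γ ∧ j < m) ∨ lexLT δ γ := by
  obtain ⟨i, hpre, hlt⟩ := h
  by_cases hi : i = Fin.last n
  · subst hi
    left
    constructor
    · funext i'
      have := hpre (Fin.castSucc i') (Fin.castSucc_lt_last i')
      simpa using this
    · simpa using hlt
  · obtain ⟨i', rfl⟩ := Fin.exists_castSucc_eq.mpr hi
    right
    refine ⟨i', fun j' hj' => ?_, by simpa using hlt⟩
    have := hpre (Fin.castSucc j') (by simpa using hj')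
    simpa using this

lemma snoc_eq_snoc {δ γ : Fin n → ℕ} {j m : ℕ}
    (h : (Fin.snoc δ j : Fin (n+1) → ℕ) = Fin.snoc γ m) : δ = γ ∧ j = m := by
  constructor
  · have := congrArg Fin.init h
    rwa [Fin.init_snoc, Fin.init_snoc] at this
  · have := congrArg (fun f : Fin (n+1) → ℕ => f (Fin.last n)) h
    simpa using this

lemma isLeadExp_monomial (γ : Fin n → ℕ) :
    IsLeadExp (monomial (toMv γ) (1 : K)) γ := by
  constructor
  · rw [show Finsupp.equivFunOnFinite.symm γ = toMv γ from rfl, coeff_monomial, if_pos rfl]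
    exact one_ne_zero
  · intro β hβ
    left
    rw [show Finsupp.equivFunOnFinite.symm β = toMv β from rfl, coeff_monomial] at hβ
    by_cases h : toMv γ = toMv β
    · exact (toMv_inj h).symm
    · exact absurd (if_neg h) hβ

lemma stdOfPoints_empty_slice {A : Set (Fin n → K)} (hA : A = ∅) :
    stdOfPoints A = ∅ := by
  ext γ
  simp only [Set.mem_empty_iff_false, iff_false, stdOfPoints, Set.mem_setOf_eq, not_not]
  exact ⟨monomial (toMv γ) 1, by simp [hA], fun h => by
    simpa using congrArg (coeff (toMv γ)) h, isLeadExp_monomial γ⟩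

end

noncomputable section
open MvPolynomial

lemma lexLT_irrefl {n : ℕ} (γ : Fin n → ℕ) : ¬ lexLT γ γ := by
  rintro ⟨i, -, hlt⟩; exact lt_irrefl _ hlt

theorem stdOfPoints_connect_four' {K : Type*} [Field K] {n : ℕ}
    (A : Set (Fin (n + 1) → K)) (hA : A.Finite) :
    stdOfPoints A = {β : Fin (n + 1) → ℕ |
      β (Fin.last n) <
        {lam : K | Fin.init β ∈ stdOfPoints {γ : Fin n → K | Fin.snoc γ lam ∈ A}}.ncard} := by
  classical
  have hlastc : ((fun a : Fin (n+1) → K => a (Fin.last n)) '' A).Finite := hA.image _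
  have hslice_sub : ∀ γ : Fin n → ℕ,
      {lam : K | γ ∈ stdOfPoints {γ' : Fin n → K | Fin.snoc γ' lam ∈ A}}
        ⊆ (fun a : Fin (n+1) → K => a (Fin.last n)) '' A := by
    intro γ lam hlam
    rcases Set.eq_empty_or_nonempty {γ' : Fin n → K | Fin.snoc γ' lam ∈ A} with he | ⟨a', ha'⟩
    · have hmem : γ ∈ stdOfPoints {γ' : Fin n → K | Fin.snoc γ' lam ∈ A} := hlam
      rw [stdOfPoints_empty_slice he] at hmem
      exact absurd hmem (Set.notMem_empty _)
    · exact ⟨Fin.snoc a' lam, ha', by simp⟩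
  ext β
  set γ : Fin n → ℕ := Fin.init β with hγ
  set m : ℕ := β (Fin.last n) with hm
  have hβ : β = Fin.snoc γ m := (Fin.snoc_init_self β).symm
  set Λ : Set K := {lam : K | γ ∈ stdOfPoints {γ' : Fin n → K | Fin.snoc γ' lam ∈ A}} with hΛ
  have hΛfin : Λ.Finite := (hlastc.subset (hslice_sub γ))
  simp only [Set.mem_setOf_eq]
  constructor
  · -- hard direction: if β is in the standard set, its height is below the column height
    intro hstd
    by_contra hge
    push_neg at hge
    have hge' : Λ.ncard ≤ m := hge
    clear hge
    set S : Finset K := hΛfin.toFinset with hS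
    have hScard : S.card = Λ.ncard := (Set.ncard_eq_toFinset_card Λ hΛfin).symm
    set Λout : Finset K := hlastc.toFinset \ S with hΛout
    have hq : ∀ μ : K, ∃ q : MvPolynomial (Fin n) K, μ ∈ Λout →
        (∀ a ∈ {γ' : Fin n → K | Fin.snoc γ' μ ∈ A}, eval a q = 0) ∧ IsLeadExp q γ
          ∧ coeff (toMv γ) q = 1 := by
      intro μ
      by_cases hμ : μ ∈ Λout
      · have hμΛ : μ ∉ Λ := by
          intro hc
          exact (Finset.mem_sdiff.mp hμ).2 (hΛfin.mem_toFinset.mpr hc)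
        rw [hΛ, Set.mem_setOf_eq, stdOfPoints, Set.mem_setOf_eq, not_not] at hμΛ
        obtain ⟨p, hvan, hp0, hlead⟩ := hμΛ
        have hc0 : coeff (toMv γ) p ≠ 0 := hlead.1
        refine ⟨MvPolynomial.C (coeff (toMv γ) p)⁻¹ * p, fun _ => ⟨fun a ha => ?_, ⟨?_, ?_⟩, ?_⟩⟩
        · rw [map_mul, hvan a ha, mul_zero]
        · show coeff (toMv γ) (MvPolynomial.C (coeff (toMv γ) p)⁻¹ * p) ≠ 0
          rw [MvPolynomial.coeff_C_mul]
          exact mul_ne_zero (inv_ne_zero hc0) hc0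
        · intro δ hδ
          refine hlead.2 δ ?_
          show coeff (toMv δ) p ≠ 0
          have := hδ
          rw [show Finsupp.equivFunOnFinite.symm δ = toMv δ from rfl, MvPolynomial.coeff_C_mul] at this
          exact fun hz => this (by rw [hz, mul_zero])
        · rw [MvPolynomial.coeff_C_mul, inv_mul_cancel₀ hc0]
      · exact ⟨1, fun hc => absurd hc hμ⟩
    choose qf hqf using hq
    -- the univariate polynomial e
    set e : Polynomial K := (∏ lam ∈ S, (Polynomial.X - Polynomial.C lam))
        * Polynomial.X ^ (m - S.card) with he
    have hemonic : e.Monic := by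
      refine Polynomial.Monic.mul ?_ (Polynomial.monic_X_pow _)
      exact Polynomial.monic_prod_of_monic _ _ fun i _ => Polynomial.monic_X_sub_C i
    have hedeg : e.natDegree = m := by
      rw [he, Polynomial.natDegree_mul (by
          exact (Polynomial.monic_prod_of_monic _ _ fun i _ => Polynomial.monic_X_sub_C i).ne_zero)
        (by exact (Polynomial.monic_X_pow _).ne_zero)]
      rw [Polynomial.natDegree_prod_of_monic _ _ fun i _ => Polynomial.monic_X_sub_C i]
      simp only [Polynomial.natDegree_X_sub_C, Polynomial.natDegree_X_pow, Finset.sum_const,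
        smul_eq_mul, mul_one]
      rw [hScard]
      omega
    have hecoeffm : e.coeff m = 1 := by
      have := hemonic.coeff_natDegree
      rwa [hedeg] at this
    have hecoeffj : ∀ j, m < j → e.coeff j = 0 := by
      intro j hj
      exact Polynomial.coeff_eq_zero_of_natDegree_lt (by omega)
    have heval0 : ∀ lam ∈ S, e.eval lam = 0 := by
      intro lam hlam
      rw [he, Polynomial.eval_mul, Polynomial.eval_prod]
      rw [Finset.prod_eq_zero hlam (by simp), zero_mul]
    -- the Lagrange basis polynomials
    set B : K → Polynomial K := fun μ => Lagrange.basis Λout id μ with hB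
    -- the polynomial p
    set p : MvPolynomial (Fin (n+1)) K :=
        (∑ μ ∈ Λout, emb (qf μ) * liftT (B μ * e))
          + emb (monomial (toMv γ) 1) * liftT ((1 - ∑ μ ∈ Λout, B μ) * e) with hp
    have hcoeff : ∀ (δ : Fin n → ℕ) (j : ℕ), coeff (toMv (Fin.snoc δ j)) p
        = (∑ μ ∈ Λout, coeff (toMv δ) (qf μ) * (B μ * e).coeff j)
          + (if toMv γ = toMv δ then 1 else 0) * ((1 - ∑ μ ∈ Λout, B μ) * e).coeff j := by
      intro δ j
      rw [hp, coeff_add, coeff_sum, coeff_emb_mul_liftT]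
      rw [Finset.sum_congr rfl fun μ _ => coeff_emb_mul_liftT (qf μ) (B μ * e) δ j]
      rw [coeff_monomial]
    have hcoeffγ : ∀ j : ℕ, coeff (toMv (Fin.snoc γ j)) p = e.coeff j := by
      intro j
      rw [hcoeff, if_pos rfl, one_mul]
      have h1 : ∀ μ ∈ Λout, coeff (toMv γ) (qf μ) * (B μ * e).coeff j
          = (B μ * e).coeff j := by
        intro μ hμ
        rw [(hqf μ hμ).2.2, one_mul]
      rw [Finset.sum_congr rfl h1]
      have h2 : (∑ μ ∈ Λout, (B μ * e).coeff j)
          = ((∑ μ ∈ Λout, B μ) * e).coeff j := by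
        rw [Finset.sum_mul, Polynomial.finset_sum_coeff]
      rw [h2, ← Polynomial.coeff_add, ← add_mul]
      ring_nf
    -- p vanishes on A
    have hvan : ∀ a ∈ A, eval a p = 0 := by
      intro a ha
      have ha' : a = Fin.snoc (Fin.init a) (a (Fin.last n)) := (Fin.snoc_init_self a).symm
      set lam : K := a (Fin.last n) with hlam
      have hlamc : lam ∈ hlastc.toFinset := hlastc.mem_toFinset.mpr ⟨a, ha, rfl⟩
      rw [hp, map_add, map_sum]
      rw [ha']
      rw [Finset.sum_congr rfl fun μ _ => eval_emb_mul_liftT (qf μ) (B μ * e) (Fin.init a) lam]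
      rw [eval_emb_mul_liftT]
      by_cases hlS : lam ∈ S
      · simp only [Polynomial.eval_mul, heval0 lam hlS, mul_zero, add_zero, Finset.sum_const_zero,
          zero_add]
      · have hlout : lam ∈ Λout := Finset.mem_sdiff.mpr ⟨hlamc, hlS⟩
        have hBeval : ∀ μ ∈ Λout, (B μ).eval lam = if μ = lam then 1 else 0 := by
          intro μ hμ
          by_cases hμl : μ = lam
          · subst hμl
            rw [if_pos rfl, hB]
            exact Lagrange.eval_basis_self (v := id) (Set.injOn_id _) hμ
          · rw [if_neg hμl, hB]
            exact Lagrange.eval_basis_of_ne (v := id) hμl hlout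
        have hsum : ∀ μ ∈ Λout, eval (Fin.init a) (qf μ) * (B μ * e).eval lam
            = if μ = lam then eval (Fin.init a) (qf lam) * e.eval lam else 0 := by
          intro μ hμ
          rw [Polynomial.eval_mul, hBeval μ hμ]
          by_cases hμl : μ = lam
          · subst hμl; rw [if_pos rfl, if_pos rfl, one_mul]
          · rw [if_neg hμl, if_neg hμl, zero_mul, mul_zero]
        rw [Finset.sum_congr rfl hsum, Finset.sum_ite_eq' Λout lam, if_pos hlout]
        have hqlam : eval (Fin.init a) (qf lam) = 0 := by
          refine (hqf lam hlout).1 (Fin.init a) ?_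
          show Fin.snoc (Fin.init a) lam ∈ A
          rw [← ha']
          exact ha
        rw [hqlam, zero_mul, zero_add, Polynomial.eval_mul]
        have : Polynomial.eval lam (1 - ∑ μ ∈ Λout, B μ) = 0 := by
          rw [Polynomial.eval_sub, Polynomial.eval_one, Polynomial.eval_finset_sum]
          rw [Finset.sum_congr rfl hBeval, Finset.sum_ite_eq' Λout lam, if_pos hlout]
          ring
        rw [this, zero_mul, mul_zero]
    -- p has lead exponent β
    refine hstd ⟨p, hvan, ?_, ⟨?_, ?_⟩⟩
    · intro hz
      have := hcoeffγ m
      rw [hz, hecoeffm] at this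
      simp at this
    · show coeff (toMv β) p ≠ 0
      rw [hβ] at *
      rw [hcoeffγ m, hecoeffm]
      exact one_ne_zero
    · intro δ' hδ'
      show δ' = β ∨ lexLT δ' β
      have hδ'c : coeff (toMv δ') p ≠ 0 := hδ'
      have hδ'form : δ' = Fin.snoc (Fin.init δ') (δ' (Fin.last n)) := (Fin.snoc_init_self δ').symm
      set δ : Fin n → ℕ := Fin.init δ' with hδdef
      set j : ℕ := δ' (Fin.last n) with hjdef
      rw [hδ'form] at hδ'c
      by_cases hδγ : δ = γ
      · -- in the column of γ: the coefficient is a coefficient of e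
        rw [hδγ, hcoeffγ j] at hδ'c
        have hjm : j ≤ m := by
          by_contra hgt
          exact hδ'c (hecoeffj j (by omega))
        rcases eq_or_lt_of_le hjm with hje | hjlt
        · left
          rw [hδ'form, hδγ, hje, ← hβ]
        · right
          rw [hδ'form, hδγ, hβ]
          exact lexLT_snoc_lt hjlt
      · -- outside the column of γ
        rw [hcoeff] at hδ'c
        rw [if_neg (fun hh => hδγ (toMv_inj hh).symm), zero_mul, add_zero] at hδ'c
        obtain ⟨μ, hμ, hne⟩ := Finset.exists_ne_zero_of_sum_ne_zero hδ'c
        have hqc : coeff (toMv δ) (qf μ) ≠ 0 := fun hz => hne (by rw [hz, zero_mul])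
        rcases (hqf μ hμ).2.1.2 δ hqc with heq | hlex
        · exact absurd heq hδγ
        · right
          rw [hδ'form, hβ]
          exact lexLT_snoc_of_lexLT hlex j m
  · -- easy direction
    intro hlt
    have hlt' : m < Λ.ncard := hlt
    intro hmem
    obtain ⟨p, hvan, hp0, hlead⟩ := hmem
    have hβc : coeff (toMv (Fin.snoc γ m)) p ≠ 0 := by
      rw [← hβ]; exact hlead.1
    have hhigh : ∀ j, m < j → coeff (toMv (Fin.snoc γ j)) p = 0 := by
      intro j hj
      by_contra hne
      rcases hlead.2 (Fin.snoc γ j) hne with heq | hlex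
      · rw [hβ] at heq
        exact absurd (snoc_eq_snoc heq).2 (by omega)
      · rw [hβ] at hlex
        rcases lexLT_snoc_cases hlex with ⟨-, hjm⟩ | hll
        · omega
        · exact lexLT_irrefl γ hll
    set r : Polynomial K := ∑ j ∈ Finset.range (m+1),
        Polynomial.C (coeff (toMv (Fin.snoc γ j)) p) * Polynomial.X ^ j with hr
    have hrm : r.coeff m = coeff (toMv (Fin.snoc γ m)) p := by
      rw [hr, Polynomial.finset_sum_coeff]
      have : ∀ j ∈ Finset.range (m+1),
          (Polynomial.C (coeff (toMv (Fin.snoc γ j)) p) * Polynomial.X ^ j).coeff m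
            = if m = j then coeff (toMv (Fin.snoc γ j)) p else 0 := by
        intro j _
        rw [Polynomial.coeff_C_mul, Polynomial.coeff_X_pow]
        split <;> simp
      rw [Finset.sum_congr rfl this, Finset.sum_ite_eq (Finset.range (m+1)) m]
      rw [if_pos (Finset.mem_range.mpr (by omega))]
    have hr0 : r ≠ 0 := fun hz => hβc (by rw [← hrm, hz, Polynomial.coeff_zero])
    have hrdeg : r.natDegree ≤ m := by
      refine Polynomial.natDegree_sum_le_of_forall_le _ _ fun j hj => ?_
      exact le_trans (Polynomial.natDegree_C_mul_X_pow_le _ _)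
        (by exact Nat.lt_succ_iff.mp (Finset.mem_range.mp hj))
    have hroots : ∀ lam ∈ Λ, r.eval lam = 0 := by
      intro lam hlam
      have hq0 : coeff (toMv γ) (subst lam p) = 0 := by
        by_contra hne
        rw [hΛ, Set.mem_setOf_eq] at hlam
        refine hlam ⟨subst lam p, fun a ha => ?_, fun hz => hne (by rw [hz, coeff_zero]),
          ⟨hne, ?_⟩⟩
        · rw [eval_subst]
          exact hvan _ ha
        · intro δ hδ
          have hδc : coeff (toMv δ) (subst lam p) ≠ 0 := hδ
          obtain ⟨j, hj⟩ := exists_of_coeff_subst_ne_zero hδc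
          rcases hlead.2 (Fin.snoc δ j) hj with heq | hlex
          · rw [hβ] at heq
            exact Or.inl (snoc_eq_snoc heq).1
          · rw [hβ] at hlex
            rcases lexLT_snoc_cases hlex with ⟨hdg, -⟩ | hll
            · exact Or.inl hdg
            · exact Or.inr hll
      rw [← coeff_subst_eq_eval hhigh, hq0]
    have hcard : r.natDegree < hΛfin.toFinset.card := by
      rw [← Set.ncard_eq_toFinset_card Λ hΛfin]
      omega
    have : r = 0 := Polynomial.eq_zero_of_natDegree_lt_card_of_eval_eq_zero' r hΛfin.toFinset
      (fun lam hlam => hroots lam (hΛfin.mem_toFinset.mp hlam)) hcard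
    exact hr0 this

end

/-- Connect Four theorem for points: for a finite set `A ⊆ F̄^{n+1}` over an
algebraically closed field, `D(A) = Σ_λ D(A_λ)` is the Connect Four sum of the
standard sets of the slices `A_λ = A ∩ {x_{n+1} = λ}`: the column of `D(A)` over
`γ` has height equal to the number of `λ` with `γ ∈ D(A_λ)`. -/
theorem stdOfPoints_connect_four {K : Type*} [Field K] [IsAlgClosed K] {n : ℕ}
    (A : Set (Fin (n + 1) → K)) (hA : A.Finite) :
    stdOfPoints A = {β : Fin (n + 1) → ℕ |
      β (Fin.last n) <
        {lam : K | Fin.init β ∈ stdOfPoints {γ : Fin n → K | Fin.snoc γ lam ∈ A}}.ncard} := stdOfPoints_connect_four' A hA
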